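/- For real numbers l, a, b with 0 < b < l ≤ a, the integral ∫_{0}^{π} min(a, l·|cos φ|)·min(b, l·sin φ) dφ equals 2lb − b². -/

import Mathlib

open Real MeasureTheory Filter

/-- `A(l,a) = ∫_0^π min(a, l·|cos φ|) dφ` -/
noncomputable def A2 (l a : ℝ) : ℝ := ∫ φ in (0:ℝ)..π, min a (l * |Real.cos φ|)

/-- `B(l,b) = ∫_0^π min(b, l·sin φ) dφ` -/
noncomputable def B2 (l b : ℝ) : ℝ := ∫ φ in (0:ℝ)..π, min b (l * Real.sin φ)

/-- `AB(l,a,b) = ∫_0^π min(a, l·|cos φ|)·min(b, l·sin φ) dφ` -/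
noncomputable def AB2 (l a b : ℝ) : ℝ :=
  ∫ φ in (0:ℝ)..π, min a (l * |Real.cos φ|) * min b (l * Real.sin φ)

/-- Intersection probability for the 2D Buffon–Laplace needle problem. -/
noncomputable def P2 (l a b : ℝ) : ℝ :=
  (b * A2 l a + a * B2 l b - AB2 l a b) / (π * a * b)

/-- Intersection probability for the 2D spherocylinder Buffon–Laplace problem. -/
noncomputable def P2sc (l σ a b : ℝ) : ℝ :=
  ((b - σ) * A2 l (a - σ) + (a - σ) * B2 l (b - σ) - AB2 l (a - σ) (b - σ)
    + (σ * a + σ * b - σ ^ 2) * π) / (π * a * b)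

/-- `A³ᴰ(l,a) = ∫_0^{π/2} ∫_0^π min(a, l·sin ψ·|cos φ|) dφ dψ` -/
noncomputable def A3 (l a : ℝ) : ℝ :=
  ∫ ψ in (0:ℝ)..(π/2), ∫ φ in (0:ℝ)..π, min a (l * Real.sin ψ * |Real.cos φ|)

/-- `B³ᴰ(l,b) = ∫_0^{π/2} ∫_0^π min(b, l·sin ψ·sin φ) dφ dψ` -/
noncomputable def B3 (l b : ℝ) : ℝ :=
  ∫ ψ in (0:ℝ)..(π/2), ∫ φ in (0:ℝ)..π, min b (l * Real.sin ψ * Real.sin φ)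

/-- `AB³ᴰ(l,a,b) = ∫_0^{π/2} ∫_0^π min(a, l·sin ψ·|cos φ|)·min(b, l·sin ψ·sin φ) dφ dψ` -/
noncomputable def AB3 (l a b : ℝ) : ℝ :=
  ∫ ψ in (0:ℝ)..(π/2), ∫ φ in (0:ℝ)..π,
    min a (l * Real.sin ψ * |Real.cos φ|) * min b (l * Real.sin ψ * Real.sin φ)

/-- `S³ᴰ(l,a,b) = b·A³ᴰ(l,a) + a·B³ᴰ(l,b) − AB³ᴰ(l,a,b)` -/
noncomputable def S3 (l a b : ℝ) : ℝ := b * A3 l a + a * B3 l b - AB3 l a b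

/-- `F(α,β,t) = ∫_α^β √(sin²ψ − t²) dψ` -/
noncomputable def Faux (α β t : ℝ) : ℝ :=
  ∫ ψ in α..β, Real.sqrt (Real.sin ψ ^ 2 - t ^ 2)

/-- `G(α,β,t) = ∫_α^β (π/2 − arcsin(t / sin ψ)) dψ` -/
noncomputable def Gaux (α β t : ℝ) : ℝ :=
  ∫ ψ in α..β, (π / 2 - Real.arcsin (t / Real.sin ψ))


theorem stmt2' (l a b : ℝ) (hb : 0 < b) (hbl : b < l) (hla : l ≤ a) :
    (∫ φ in (0:ℝ)..π, min a (l * |Real.cos φ|) * min b (l * Real.sin φ))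
      = 2 * l * b - b ^ 2 := by
  have hl : 0 < l := hb.trans hbl
  set θ := Real.arcsin (b / l) with hθdef
  have hbl1 : b / l < 1 := (div_lt_one hl).2 hbl
  have hbl0 : 0 < b / l := div_pos hb hl
  have hsinθ : Real.sin θ = b / l := Real.sin_arcsin (by linarith) hbl1.le
  have hθ0 : 0 < θ := Real.arcsin_pos.2 hbl0
  have hθlt : θ < π / 2 := Real.arcsin_lt_pi_div_two.2 hbl1
  have hπ : (0:ℝ) < π := Real.pi_pos
  -- the integrand as an explicit function
  set f : ℝ → ℝ := fun φ => l * |Real.cos φ| * min b (l * Real.sin φ) with hf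
  have hmin : ∀ φ, min a (l * |Real.cos φ|) * min b (l * Real.sin φ) = f φ := by
    intro φ
    have h1 : l * |Real.cos φ| ≤ a := by
      have := Real.abs_cos_le_one φ
      nlinarith
    rw [min_eq_right h1]
  have hcont : Continuous f := by
    apply Continuous.mul
    · exact continuous_const.mul Real.continuous_cos.abs
    · exact continuous_const.min (continuous_const.mul Real.continuous_sin)
  have hint : ∀ u v : ℝ, IntervalIntegrable f volume u v := fun u v =>
    hcont.intervalIntegrable u v
  -- piece 1 : [0, θ]
  have h1 : (∫ φ in (0:ℝ)..θ, f φ) = b ^ 2 / 2 := by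
    have hco : (∫ φ in (0:ℝ)..θ, f φ)
        = ∫ φ in (0:ℝ)..θ, l ^ 2 * (Real.sin φ * Real.cos φ) := by
      apply intervalIntegral.integral_congr
      intro φ hφ
      rw [Set.uIcc_of_le hθ0.le] at hφ
      obtain ⟨h0, hθ'⟩ := hφ
      have hcos : 0 ≤ Real.cos φ := Real.cos_nonneg_of_mem_Icc
        ⟨by linarith, by linarith⟩
      have hsin : Real.sin φ ≤ b / l := by
        rw [← hsinθ]
        exact Real.sin_le_sin_of_le_of_le_pi_div_two (by linarith) hθlt.le hθ'
      have : l * Real.sin φ ≤ b := by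
        rw [le_div_iff₀ hl] at hsin; linarith
      simp only [hf, abs_of_nonneg hcos, min_eq_right this]
      ring
    rw [hco]
    have hd : ∀ x ∈ Set.uIcc (0:ℝ) θ,
        HasDerivAt (fun x => l ^ 2 * Real.sin x ^ 2 / 2)
          (l ^ 2 * (Real.sin x * Real.cos x)) x := by
      intro x _
      have : HasDerivAt (fun x => Real.sin x ^ 2) (2 * Real.sin x * Real.cos x) x := by
        simpa using (Real.hasDerivAt_sin x).fun_pow 2
      have := (this.const_mul (l ^ 2)).div_const 2
      exact this.congr_deriv (by ring)
    rw [intervalIntegral.integral_eq_sub_of_hasDerivAt hd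
      ((continuous_const.mul (Real.continuous_sin.mul Real.continuous_cos)).intervalIntegrable _ _)]
    rw [hsinθ, Real.sin_zero]
    field_simp
    ring
  -- piece 2 : [θ, π/2]
  have h2 : (∫ φ in θ..(π/2), f φ) = l * b - b ^ 2 := by
    have hco : (∫ φ in θ..(π/2), f φ)
        = ∫ φ in θ..(π/2), (l * b) * Real.cos φ := by
      apply intervalIntegral.integral_congr
      intro φ hφ
      rw [Set.uIcc_of_le hθlt.le] at hφ
      obtain ⟨hθ', h2'⟩ := hφ
      have hcos : 0 ≤ Real.cos φ := Real.cos_nonneg_of_mem_Icc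
        ⟨by linarith, h2'⟩
      have hsin : b / l ≤ Real.sin φ := by
        rw [← hsinθ]
        exact Real.sin_le_sin_of_le_of_le_pi_div_two (by linarith) h2' hθ'
      have : b ≤ l * Real.sin φ := by
        rw [div_le_iff₀ hl] at hsin; linarith
      simp only [hf, abs_of_nonneg hcos, min_eq_left this]
      ring
    rw [hco, intervalIntegral.integral_const_mul, integral_cos]
    rw [Real.sin_pi_div_two, hsinθ]
    field_simp
  -- piece 3 : [π/2, π - θ]
  have h3 : (∫ φ in (π/2)..(π - θ), f φ) = l * b - b ^ 2 := by
    have hco : (∫ φ in (π/2)..(π - θ), f φ)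
        = ∫ φ in (π/2)..(π - θ), (-(l * b)) * Real.cos φ := by
      apply intervalIntegral.integral_congr
      intro φ hφ
      rw [Set.uIcc_of_le (by linarith)] at hφ
      obtain ⟨h2', h3'⟩ := hφ
      have hcos : Real.cos φ ≤ 0 := Real.cos_nonpos_of_pi_div_two_le_of_le h2' (by linarith)
      have hsin : b / l ≤ Real.sin φ := by
        rw [← hsinθ, ← Real.sin_pi_sub φ]
        exact Real.sin_le_sin_of_le_of_le_pi_div_two (by linarith) (by linarith) (by linarith)
      have : b ≤ l * Real.sin φ := by
        rw [div_le_iff₀ hl] at hsin; linarith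
      simp only [hf, abs_of_nonpos hcos, min_eq_left this]
      ring
    rw [hco, intervalIntegral.integral_const_mul, integral_cos]
    rw [Real.sin_pi_div_two, Real.sin_pi_sub, hsinθ]
    field_simp
    ring
  -- piece 4 : [π - θ, π]
  have h4 : (∫ φ in (π - θ)..π, f φ) = b ^ 2 / 2 := by
    have hco : (∫ φ in (π - θ)..π, f φ)
        = ∫ φ in (π - θ)..π, (-(l ^ 2)) * (Real.sin φ * Real.cos φ) := by
      apply intervalIntegral.integral_congr
      intro φ hφ
      rw [Set.uIcc_of_le (by linarith)] at hφ
      obtain ⟨h3', h4'⟩ := hφ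
      have hcos : Real.cos φ ≤ 0 := Real.cos_nonpos_of_pi_div_two_le_of_le (by linarith) (by linarith)
      have hsin : Real.sin φ ≤ b / l := by
        rw [← hsinθ, ← Real.sin_pi_sub φ]
        exact Real.sin_le_sin_of_le_of_le_pi_div_two (by linarith) (by linarith) (by linarith)
      have : l * Real.sin φ ≤ b := by
        rw [le_div_iff₀ hl] at hsin; linarith
      simp only [hf, abs_of_nonpos hcos, min_eq_right this]
      ring
    rw [hco]
    have hd : ∀ x ∈ Set.uIcc (π - θ) π,
        HasDerivAt (fun x => -(l ^ 2) * Real.sin x ^ 2 / 2)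
          (-(l ^ 2) * (Real.sin x * Real.cos x)) x := by
      intro x _
      have : HasDerivAt (fun x => Real.sin x ^ 2) (2 * Real.sin x * Real.cos x) x := by
        simpa using (Real.hasDerivAt_sin x).fun_pow 2
      have := (this.const_mul (-(l ^ 2))).div_const 2
      exact this.congr_deriv (by ring)
    rw [intervalIntegral.integral_eq_sub_of_hasDerivAt hd
      ((continuous_const.mul (Real.continuous_sin.mul Real.continuous_cos)).intervalIntegrable _ _)]
    rw [Real.sin_pi, Real.sin_pi_sub, hsinθ]
    field_simp
    ring
  -- assemble
  have hsplit :
      (∫ φ in (0:ℝ)..θ, f φ) + (∫ φ in θ..(π/2), f φ) + (∫ φ in (π/2)..(π - θ), f φ)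
        + (∫ φ in (π - θ)..π, f φ) = ∫ φ in (0:ℝ)..π, f φ := by
    rw [intervalIntegral.integral_add_adjacent_intervals (hint _ _) (hint _ _),
        intervalIntegral.integral_add_adjacent_intervals (hint _ _) (hint _ _),
        intervalIntegral.integral_add_adjacent_intervals (hint _ _) (hint _ _)]
  calc (∫ φ in (0:ℝ)..π, min a (l * |Real.cos φ|) * min b (l * Real.sin φ))
      = ∫ φ in (0:ℝ)..π, f φ := by
        apply intervalIntegral.integral_congr; intro φ _; exact hmin φ
    _ = 2 * l * b - b ^ 2 := by rw [← hsplit, h1, h2, h3, h4]; ring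

theorem stmt2 (l a b : ℝ) (hb : 0 < b) (hbl : b < l) (hla : l ≤ a) :
    AB2 l a b = 2 * l * b - b ^ 2 := by
  unfold AB2; exact stmt2' l a b hb hbl hla
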